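/- Let $R$ be a commutative ring and $I$ an ideal of $R$. The real radical $rad_<(I) := \{f \in R : f^{2m} + s \in I \text{ for some } m \in \mathbb{N} \text{ and some sum of squares } s\}$ is the smallest real ideal of $R$ containing $I$. -/

import Mathlib

section Aux
variable {R : Type*} [CommRing R]

private lemma isSumSq_one' : IsSumSq (1 : R) := by
  simpa using IsSumSq.sq_add (1 : R) 0 IsSumSq.zero

private lemma isSumSq_sq' (a : R) : IsSumSq (a ^ 2) := by
  rw [sq]; simpa using IsSumSq.sq_add a 0 IsSumSq.zero

private lemma isSumSq_mul_self_mul {t : R} (a : R) (ht : IsSumSq t) :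
    IsSumSq (a * a * t) := by
  induction ht with
  | zero => simpa using IsSumSq.zero
  | @sq_add b v _ ih =>
      have h : a * a * (b * b + v) = (a * b) * (a * b) + a * a * v := by ring
      rw [h]; exact IsSumSq.sq_add _ ih

private lemma isSumSq_sq_mul {t : R} (a : R) (ht : IsSumSq t) :
    IsSumSq (a ^ 2 * t) := by rw [sq]; exact isSumSq_mul_self_mul a ht

private lemma IsSumSq.mul' {s t : R} (hs : IsSumSq s) (ht : IsSumSq t) :
    IsSumSq (s * t) := by
  induction hs with
  | zero => simpa using IsSumSq.zero
  | @sq_add a u _ ih =>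
      have h : (a * a + u) * t = a * a * t + u * t := by ring
      rw [h]; exact (isSumSq_mul_self_mul a ht).add ih

private lemma isSumSq_natCast (n : ℕ) : IsSumSq (n : R) := by
  induction n with
  | zero => simpa using IsSumSq.zero
  | succ k ih =>
      push_cast
      have h : ((k : R) + 1) = 1 * 1 + (k : R) := by ring
      rw [h]; exact IsSumSq.sq_add _ ih

private lemma isSumSq_pow {s : R} (hs : IsSumSq s) (n : ℕ) : IsSumSq (s ^ n) := by
  induction n with
  | zero => simpa using isSumSq_one'
  | succ k ih => rw [pow_succ]; exact ih.mul' hs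

private lemma isSumSq_finsetSum {ι : Type*} (t : Finset ι) (f : ι → R)
    (h : ∀ j ∈ t, IsSumSq (f j)) : IsSumSq (∑ j ∈ t, f j) := by
  classical
  induction t using Finset.induction_on with
  | empty => simpa using IsSumSq.zero
  | insert _ _ hnot ih =>
      rw [Finset.sum_insert hnot]
      exact (h _ (Finset.mem_insert_self _ _)).add
        (ih fun j hj => h j (Finset.mem_insert_of_mem hj))

private lemma isSumSq_exists_fin {s : R} (hs : IsSumSq s) :
    ∃ (n : ℕ) (u : Fin n → R), ∑ i, u i ^ 2 = s := by
  induction hs with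
  | zero => exact ⟨0, ![], by simp⟩
  | @sq_add a v _ ih =>
      obtain ⟨n, u, hu⟩ := ih
      refine ⟨n + 1, Fin.cons a u, ?_⟩
      rw [Fin.sum_univ_succ]
      simp only [Fin.cons_zero, Fin.cons_succ]
      rw [hu, sq]

end Aux

section Main
variable {R : Type*} [CommRing R]

/-- The "preordering" predicate: `x = s + i` with `s` a sum of squares and `i ∈ I`. -/
private def TP (I : Ideal R) (x : R) : Prop := ∃ s, IsSumSq s ∧ x - s ∈ I

private lemma TP.add' {I : Ideal R} {x y : R} (hx : TP I x) (hy : TP I y) :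
    TP I (x + y) := by
  obtain ⟨s, hs, hxs⟩ := hx
  obtain ⟨t, ht, hyt⟩ := hy
  refine ⟨s + t, hs.add ht, ?_⟩
  have := I.add_mem hxs hyt
  have he : x + y - (s + t) = (x - s) + (y - t) := by ring
  rwa [he]

private lemma TP.sos {I : Ideal R} {s : R} (hs : IsSumSq s) : TP I s :=
  ⟨s, hs, by simpa using I.zero_mem⟩

private lemma TP.sqmul {I : Ideal R} (a : R) {x : R} (hx : TP I x) :
    TP I (a ^ 2 * x) := by
  obtain ⟨s, hs, hxs⟩ := hx
  refine ⟨a ^ 2 * s, isSumSq_sq_mul a hs, ?_⟩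
  have := I.mul_mem_left (a ^ 2) hxs
  have he : a ^ 2 * x - a ^ 2 * s = a ^ 2 * (x - s) := by ring
  rwa [he]

private lemma TP.neg_four_mul {I : Ideal R} (p : R) {x : R} (hx : TP I (-x))
    (hxs : IsSumSq x) : TP I (-(4 * (p * x))) := by
  have t1 : TP I ((p + 1) ^ 2 * (-x)) := TP.sqmul _ hx
  have t2 : TP I ((p - 1) ^ 2 * x) := TP.sos (isSumSq_sq_mul _ hxs)
  have := t1.add' t2
  have he : -(4 * (p * x)) = (p + 1) ^ 2 * (-x) + (p - 1) ^ 2 * x := by ring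
  rwa [he]

private lemma TP_of_mem {I : Ideal R} {f s : R} {m : ℕ} (hs : IsSumSq s)
    (h : f ^ (2 * m) + s ∈ I) : TP I (-(f ^ (2 * m))) := by
  refine ⟨s, hs, ?_⟩
  have := I.neg_mem h
  have he : -(f ^ (2 * m)) - s = -(f ^ (2 * m) + s) := by ring
  rwa [he]

private lemma mem_of_TP {I : Ideal R} {f : R} {m : ℕ} (h : TP I (-(f ^ (2 * m)))) :
    ∃ (m' : ℕ) (s : R), IsSumSq s ∧ f ^ (2 * m') + s ∈ I := by
  obtain ⟨s, hs, hme⟩ := h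
  refine ⟨m, s, hs, ?_⟩
  have := I.neg_mem hme
  have he : f ^ (2 * m) + s = -(-(f ^ (2 * m)) - s) := by ring
  rwa [he]

end Main

/-- The real radical of an ideal `I` is the smallest real ideal containing `I`. -/
theorem stmt_8 (R : Type*) [CommRing R] (I : Ideal R) :
    ∃ J : Ideal R,
      (↑J = {f : R | ∃ (m : ℕ) (s : R), IsSumSq s ∧ f ^ (2 * m) + s ∈ I}) ∧
      (∀ (n : ℕ) (u : Fin n → R), (∑ i, u i ^ 2) ∈ J → ∀ i, u i ∈ J) ∧
      I ≤ J ∧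
      ∀ K : Ideal R,
        (∀ (n : ℕ) (u : Fin n → R), (∑ i, u i ^ 2) ∈ K → ∀ i, u i ∈ K) →
        I ≤ K → J ≤ K := by
  classical
  refine ⟨{ carrier := {f : R | ∃ (m : ℕ) (s : R), IsSumSq s ∧ f ^ (2 * m) + s ∈ I}
            zero_mem' := ⟨1, 0, IsSumSq.zero, by simpa using I.zero_mem⟩
            add_mem' := ?_
            smul_mem' := ?_ }, rfl, ?_, ?_, ?_⟩
  · -- additivity
    rintro a b ⟨ma, sa, hsa, ha⟩ ⟨mb, sb, hsb, hb⟩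
    obtain ⟨k, hk⟩ : ∃ k, k = ma + mb := ⟨ma + mb, rfl⟩
    have hTa : TP I (-(a ^ (2 * k))) := by
      have h1 := TP.sqmul (a ^ mb) (TP_of_mem hsa ha)
      have he : -(a ^ (2 * k)) = (a ^ mb) ^ 2 * (-(a ^ (2 * ma))) := by
        subst hk; ring
      rwa [he]
    have hTb : TP I (-(b ^ (2 * k))) := by
      have h1 := TP.sqmul (b ^ ma) (TP_of_mem hsb hb)
      have he : -(b ^ (2 * k)) = (b ^ ma) ^ 2 * (-(b ^ (2 * mb))) := by
        subst hk; ring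
      rwa [he]
    have hsqa : IsSumSq (a ^ (2 * k)) := by
      have := isSumSq_sq' (a ^ k); rwa [← pow_mul, Nat.mul_comm] at this
    have hsqb : IsSumSq (b ^ (2 * k)) := by
      have := isSumSq_sq' (b ^ k); rwa [← pow_mul, Nat.mul_comm] at this
    -- radical argument to get a power of a + b in the span
    have hrad : a + b ∈ (Ideal.span {a ^ (2 * k), b ^ (2 * k)}).radical := by
      refine Ideal.add_mem _ ?_ ?_
      · exact Ideal.mem_radical_iff.mpr ⟨2 * k, Ideal.subset_span (by simp)⟩
      · exact Ideal.mem_radical_iff.mpr ⟨2 * k, Ideal.subset_span (by simp)⟩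
    obtain ⟨N, hN⟩ := Ideal.mem_radical_iff.mp hrad
    have hN2 : (a + b) ^ (2 * N) ∈ Ideal.span {a ^ (2 * k), b ^ (2 * k)} := by
      have := Ideal.mul_mem_left _ ((a + b) ^ N) hN
      rwa [← pow_add, ← two_mul] at this
    obtain ⟨p, q, hpq⟩ := Ideal.mem_span_pair.mp hN2
    have h4a : TP I (-(4 * (p * a ^ (2 * k)))) := TP.neg_four_mul p hTa hsqa
    have h4b : TP I (-(4 * (q * b ^ (2 * k)))) := TP.neg_four_mul q hTb hsqb
    have h4 : TP I (-(4 * ((a + b) ^ (2 * N)))) := by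
      have := h4a.add' h4b
      have he : -(4 * ((a + b) ^ (2 * N)))
          = -(4 * (p * a ^ (2 * k))) + -(4 * (q * b ^ (2 * k))) := by
        rw [← hpq]; ring
      rwa [he]
    obtain ⟨s, hs, hmem⟩ := h4
    refine ⟨N, 3 * ((a + b) ^ N) ^ 2 + s,
      (((isSumSq_natCast 3).mul' (isSumSq_sq' _))).add hs, ?_⟩
    have := I.neg_mem hmem
    have heq : (a + b) ^ (2 * N) = ((a + b) ^ N) ^ 2 := by
      rw [← pow_mul, Nat.mul_comm]
    have he : (a + b) ^ (2 * N) + (3 * ((a + b) ^ N) ^ 2 + s)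
        = -(-(4 * ((a + b) ^ (2 * N))) - s) := by
      rw [heq]; push_cast; ring
    rwa [he]
  · -- closed under scalar multiplication
    rintro c x ⟨m, s, hs, hx⟩
    have h1 := TP.sqmul (c ^ m) (TP_of_mem hs hx)
    have he : -((c * x) ^ (2 * m)) = (c ^ m) ^ 2 * (-(x ^ (2 * m))) := by ring
    rw [← he] at h1
    simpa [smul_eq_mul] using mem_of_TP h1
  · -- realness
    rintro n u ⟨m, s, hs, hq⟩ i
    have hqsplit : (∑ j, u j ^ 2)
        = u i ^ 2 + ∑ j ∈ Finset.univ.erase i, u j ^ 2 :=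
      (Finset.add_sum_erase _ _ (Finset.mem_univ i)).symm
    set r : R := ∑ j ∈ Finset.univ.erase i, u j ^ 2 with hr_def
    have hr : IsSumSq r := isSumSq_finsetSum _ _ (fun j _ => isSumSq_sq' _)
    have hexp : (∑ j, u j ^ 2) ^ (2 * m)
        = (∑ j ∈ Finset.range (2 * m),
            (u i ^ 2) ^ j * r ^ (2 * m - j) * ((2 * m).choose j : R))
          + u i ^ (2 * (2 * m)) := by
      rw [hqsplit, add_pow, Finset.sum_range_succ]
      have h2 : (u i ^ 2) ^ (2 * m) * r ^ (2 * m - 2 * m)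
          * (((2 * m).choose (2 * m) : ℕ) : R) = u i ^ (2 * (2 * m)) := by
        simp [Nat.sub_self, Nat.choose_self, pow_mul]
      rw [h2]
    set σ : R := ∑ j ∈ Finset.range (2 * m),
        (u i ^ 2) ^ j * r ^ (2 * m - j) * ((2 * m).choose j : R) with hσ_def
    have hσ : IsSumSq σ :=
      isSumSq_finsetSum _ _ (fun j _ =>
        ((isSumSq_pow (isSumSq_sq' _) j).mul' (isSumSq_pow hr _)).mul'
          (isSumSq_natCast _))
    refine ⟨2 * m, σ + s, hσ.add hs, ?_⟩
    have he : u i ^ (2 * (2 * m)) + (σ + s) = (∑ j, u j ^ 2) ^ (2 * m) + s := by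
      rw [hexp]; ring
    rwa [he]
  · -- I ≤ J
    intro f hf
    exact ⟨1, 0, IsSumSq.zero, by
      simpa using I.pow_mem_of_mem hf 2 (by norm_num)⟩
  · -- minimality
    intro K hK hIK f hf
    obtain ⟨m, s, hs, hmem⟩ := hf
    have hroot : ∀ (t : ℕ) (g : R), g ^ (2 ^ t) ∈ K → g ∈ K := by
      intro t
      induction t with
      | zero => intro g h; simpa using h
      | succ t ih =>
          intro g h
          apply ih
          have h2 : (∑ i : Fin 1, (fun _ : Fin 1 => g ^ (2 ^ t)) i ^ 2) ∈ K := by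
            have he : (g ^ (2 ^ t)) ^ 2 = g ^ (2 ^ (t + 1)) := by
              rw [← pow_mul, pow_succ]
            simpa [he] using h
          exact hK 1 _ h2 0
    have hpow : ∀ (M : ℕ) (g : R), g ^ M ∈ K → g ∈ K := by
      intro M g hg
      rcases Nat.eq_zero_or_pos M with hM | hM
      · have h1 : (1 : R) ∈ K := by simpa [hM] using hg
        have hT := (Ideal.eq_top_iff_one K).mpr h1
        rw [hT]; exact Submodule.mem_top
      · have hle : M ≤ 2 ^ M := Nat.le_of_lt ((Nat.lt_two_pow_self (n := M)))
        have h2 : g ^ (2 ^ M) ∈ K := by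
          have := K.mul_mem_right (g ^ (2 ^ M - M)) hg
          rwa [← pow_add, Nat.add_sub_cancel' hle] at this
        exact hroot M g h2
    obtain ⟨n, v, hv⟩ := isSumSq_exists_fin hs
    have hKmem : f ^ (2 * m) + s ∈ K := hIK hmem
    have hsum : (∑ j : Fin (n + 1), (Fin.cons (f ^ m) v : Fin (n + 1) → R) j ^ 2) ∈ K := by
      rw [Fin.sum_univ_succ]
      simp only [Fin.cons_zero, Fin.cons_succ]
      rw [hv]
      have he : (f ^ m) ^ 2 = f ^ (2 * m) := by rw [← pow_mul, Nat.mul_comm]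
      rw [he]; exact hKmem
    have hfm := hK (n + 1) _ hsum 0
    simp only [Fin.cons_zero] at hfm
    exact hpow m f hfm
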